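/- Let (Ω, F, P) be a probability space and d ≥ 1. For each integer k ≥ 2, let (V_{k,j})_{j≥1} be ℝ^d-valued random vectors and (F_{k,j})_{j≥0} an increasing sequence of sub-σ-algebras of F such that V_{k,j} is F_{k,j}-measurable and, for each coordinate r ∈ {1,…,d}, E[ [V_{k,j}]_r | F_{k,j−1} ] = 0 almost surely and E[ |[V_{k,j}]_r|^m | F_{k,j−1} ] ≤ (m!/2)·b^{m−2}·σ² almost surely for every integer m ≥ 2, with constants b > 0 and σ² > 0 not depending on k, j or r. Let ε_λ ∈ (0,1), λ₀ ≥ 2, ν > 0, set λ_k = λ₀·(log k)^{1+ε_λ}, and let N_k be positive-integer-valued random variables with N_k ≥ λ_k·ν almost surely for all k. Then for every κ > 0, P( ‖ (1/N_k)·Σ_{j=1}^{N_k} V_{k,j} ‖ > κ for infinitely many k ) = 0, where ‖·‖ is the Euclidean norm on ℝ^d. -/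

import Mathlib

open MeasureTheory ProbabilityTheory Filter Real
open scoped ENNReal

lemma aux_mul_bound {Ω : Type*} {m0 : MeasurableSpace Ω} (P : Measure Ω) [IsProbabilityMeasure P]
    {𝓖 : MeasurableSpace Ω} (h𝓖 : 𝓖 ≤ m0) {f g : Ω → ℝ} {c : ℝ} (hc : 0 ≤ c)
    (hf : StronglyMeasurable[𝓖] f) (hf0 : ∀ ω, 0 ≤ f ω) (hfi : Integrable f P)
    (hg0 : ∀ ω, 0 ≤ g ω) (hgi : Integrable g P)
    (hce : ∀ᵐ ω ∂P, (P[g|𝓖]) ω ≤ c) :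
    ∫⁻ ω, ENNReal.ofReal (f ω * g ω) ∂P ≤ ENNReal.ofReal (c * ∫ ω, f ω ∂P) := by
  set fM : ℕ → Ω → ℝ := fun M ω => min (f ω) (M : ℝ) with hfM
  have hfM_sm : ∀ M : ℕ, StronglyMeasurable[𝓖] (fM M) :=
    fun M => hf.inf stronglyMeasurable_const
  have hfM0 : ∀ M ω, 0 ≤ fM M ω := fun M ω => le_min (hf0 ω) (M.cast_nonneg)
  have hfM_bdd : ∀ M : ℕ, ∀ ω, ‖fM M ω‖ ≤ (M : ℝ) := by
    intro M ω
    rw [Real.norm_eq_abs, abs_of_nonneg (hfM0 M ω)]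
    exact min_le_right _ _
  have hfM_int : ∀ M : ℕ, Integrable (fM M) P := by
    intro M
    refine hfi.mono ((hfM_sm M).mono h𝓖).aestronglyMeasurable (Filter.Eventually.of_forall ?_)
    intro ω
    rw [Real.norm_eq_abs, Real.norm_eq_abs, abs_of_nonneg (hfM0 M ω), abs_of_nonneg (hf0 ω)]
    exact min_le_left _ _
  have key : ∀ M : ℕ, ∫ ω, fM M ω * g ω ∂P ≤ c * ∫ ω, f ω ∂P := by
    intro M
    have hInt : Integrable (fun ω => fM M ω * g ω) P :=
      hgi.bdd_mul ((hfM_sm M).mono h𝓖).aestronglyMeasurable (Filter.Eventually.of_forall (hfM_bdd M))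
    have h1 : ∫ ω, fM M ω * g ω ∂P = ∫ ω, (P[fM M * g|𝓖]) ω ∂P :=
      (integral_condExp h𝓖).symm
    have h2 : P[fM M * g|𝓖] =ᵐ[P] fM M * P[g|𝓖] :=
      condExp_mul_of_stronglyMeasurable_left (hfM_sm M) hInt hgi
    have hInt2 : Integrable (fun ω => fM M ω * (P[g|𝓖]) ω) P :=
      (integrable_condExp).bdd_mul ((hfM_sm M).mono h𝓖).aestronglyMeasurable (Filter.Eventually.of_forall (hfM_bdd M))
    have hInt3 : Integrable (fun ω => fM M ω * c) P := (hfM_int M).mul_const c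
    have h3 : ∫ ω, (P[fM M * g|𝓖]) ω ∂P = ∫ ω, fM M ω * (P[g|𝓖]) ω ∂P :=
      integral_congr_ae h2
    have h4 : ∫ ω, fM M ω * (P[g|𝓖]) ω ∂P ≤ ∫ ω, fM M ω * c ∂P := by
      refine integral_mono_ae hInt2 hInt3 ?_
      filter_upwards [hce] with ω hω
      exact mul_le_mul_of_nonneg_left hω (hfM0 M ω)
    have h5 : ∫ ω, fM M ω * c ∂P ≤ c * ∫ ω, f ω ∂P := by
      rw [integral_mul_const, mul_comm]
      refine mul_le_mul_of_nonneg_left ?_ hc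
      exact integral_mono (hfM_int M) hfi (fun ω => min_le_left _ _)
    calc ∫ ω, fM M ω * g ω ∂P = ∫ ω, fM M ω * (P[g|𝓖]) ω ∂P := by rw [h1, h3]
      _ ≤ c * ∫ ω, f ω ∂P := h4.trans h5
  have hsup : ∀ ω, ENNReal.ofReal (f ω * g ω) = ⨆ M : ℕ, ENNReal.ofReal (fM M ω * g ω) := by
    intro ω
    refine le_antisymm ?_ (iSup_le fun M => ENNReal.ofReal_le_ofReal
      (mul_le_mul_of_nonneg_right (min_le_left _ _) (hg0 ω)))
    refine le_trans (le_of_eq ?_) (le_iSup _ ⌈f ω⌉₊)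
    congr 1
    rw [hfM]
    simp only []
    rw [min_eq_left (Nat.le_ceil (f ω))]
  calc ∫⁻ ω, ENNReal.ofReal (f ω * g ω) ∂P
      = ∫⁻ ω, ⨆ M : ℕ, ENNReal.ofReal (fM M ω * g ω) ∂P := by
        simp_rw [hsup]
    _ = ⨆ M : ℕ, ∫⁻ ω, ENNReal.ofReal (fM M ω * g ω) ∂P := by
        refine lintegral_iSup' (fun M => ?_) (Filter.Eventually.of_forall fun ω M M' hMM' => ?_)
        · exact (((hfM_sm M).mono h𝓖).aestronglyMeasurable.aemeasurable.mul
            hgi.aestronglyMeasurable.aemeasurable).ennreal_ofReal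
        · exact ENNReal.ofReal_le_ofReal (mul_le_mul_of_nonneg_right
            (min_le_min le_rfl (Nat.cast_le.mpr hMM')) (hg0 ω))
    _ ≤ ENNReal.ofReal (c * ∫ ω, f ω ∂P) := by
        refine iSup_le fun M => ?_
        rw [← ofReal_integral_eq_lintegral_ofReal
          (hgi.bdd_mul ((hfM_sm M).mono h𝓖).aestronglyMeasurable (Filter.Eventually.of_forall (hfM_bdd M)))
          (Filter.Eventually.of_forall fun ω => mul_nonneg (hfM0 M ω) (hg0 ω))]
        exact ENNReal.ofReal_le_ofReal (key M)

-- pointwise exponential inequality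
lemma aux_exp_pt (y : ℝ) : Real.exp y ≤ 1 + y + (Real.exp |y| - 1 - |y|) := by
  rcases le_or_gt 0 y with h | h
  · rw [abs_of_nonneg h]; ring_nf; exact le_rfl
  · rw [abs_of_neg h]
    have hs : Real.sinh y < y := Real.sinh_lt_self_iff.mpr h
    rw [Real.sinh_eq] at hs
    linarith
-- exp as series of abs
lemma aux_exp_series (y : ℝ) (hy : 0 ≤ y) :
    Real.exp y = ∑' m : ℕ, y ^ m / m.factorial := by
  rw [Real.exp_eq_exp_ℝ, NormedSpace.exp_eq_tsum_div]
lemma aux_exp_tail (y : ℝ) (hy : 0 ≤ y) :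
    Real.exp y - 1 - y = ∑' i : ℕ, y ^ (i + 2) / (i + 2).factorial := by
  have hsum : Summable (fun m : ℕ => y ^ m / m.factorial) := Real.summable_pow_div_factorial y
  have h := Summable.sum_add_tsum_nat_add (f := fun m : ℕ => y ^ m / m.factorial) 2 hsum
  rw [← aux_exp_series y hy] at h
  have h2 : ∑ i ∈ Finset.range 2, y ^ i / (i.factorial : ℝ) = 1 + y := by
    simp [Finset.sum_range_succ]
  rw [h2] at h
  linarith

lemma aux_step {Ω : Type*} {m0 : MeasurableSpace Ω} (P : Measure Ω) [IsProbabilityMeasure P]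
    {𝓖 : MeasurableSpace Ω} (h𝓖 : 𝓖 ≤ m0) {f X : Ω → ℝ} {b Q t : ℝ}
    (hb : 0 < b) (hQ : 0 < Q) (ht : 0 < t) (htb : t * b ≤ 1/2)
    (hf : StronglyMeasurable[𝓖] f) (hf0 : ∀ ω, 0 ≤ f ω) (hfi : Integrable f P)
    (hXi : Integrable X P)
    (hXm : ∀ m, 2 ≤ m → Integrable (fun ω => |X ω| ^ m) P)
    (hmean : P[X|𝓖] =ᵐ[P] 0)
    (hmom : ∀ m, 2 ≤ m → ∀ᵐ ω ∂P, (P[fun ω' => |X ω'| ^ m|𝓖]) ω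
      ≤ (m.factorial : ℝ) / 2 * b ^ (m - 2) * Q) :
    Integrable (fun ω => f ω * Real.exp (t * X ω)) P ∧
    ∫ ω, f ω * Real.exp (t * X ω) ∂P ≤ (1 + t ^ 2 * Q) * ∫ ω, f ω ∂P := by
  have hfint_nonneg : 0 ≤ ∫ ω, f ω ∂P := integral_nonneg hf0
  have hfm0 : AEStronglyMeasurable[m0] f P := (hf.mono h𝓖).aestronglyMeasurable
  -- the constants c m
  set c : ℕ → ℝ := fun m => if m = 0 then 1 else if m = 1 then (1 + Q)/2
    else (m.factorial : ℝ)/2 * b ^ (m - 2) * Q with hc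
  have hcnn : ∀ m, 0 ≤ c m := by
    intro m
    rw [hc]
    dsimp only
    split_ifs
    · norm_num
    · positivity
    · positivity
  -- conditional bound for |X|
  have habs1 : ∀ᵐ ω ∂P, (P[(fun ω' => |X ω'|)|𝓖]) ω ≤ (1 + Q)/2 := by
    have hXsqi : Integrable (fun ω => |X ω| ^ 2) P := hXm 2 le_rfl
    have hle : (fun ω => |X ω|) ≤ᵐ[P] fun ω => (1/2 : ℝ) * (1 + |X ω| ^ 2) := by
      refine Filter.Eventually.of_forall fun ω => ?_
      nlinarith [sq_nonneg (|X ω| - 1), abs_nonneg (X ω)]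
    have hRi : Integrable (fun ω => (1/2 : ℝ) * (1 + |X ω| ^ 2)) P :=
      ((integrable_const (1:ℝ)).add hXsqi).const_mul _
    have h1 := condExp_mono (μ := P) (m := 𝓖) hXi.abs hRi hle
    have h2 : P[fun ω => (1/2 : ℝ) * (1 + |X ω| ^ 2)|𝓖]
        =ᵐ[P] fun ω => (1/2 : ℝ) * (1 + (P[fun ω' => |X ω'| ^ 2|𝓖]) ω) := by
      have e1 : (fun ω => (1/2 : ℝ) * (1 + |X ω| ^ 2))
          = (1/2 : ℝ) • ((fun _ => (1:ℝ)) + fun ω => |X ω| ^ 2) := by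
        funext ω; simp
      rw [e1]
      refine (condExp_smul (1/2 : ℝ) _ 𝓖).trans ?_
      have := condExp_add (μ := P) (m := 𝓖) (integrable_const (1:ℝ)) hXsqi
      filter_upwards [this] with ω hω
      simp only [Pi.smul_apply, smul_eq_mul]
      rw [hω]
      have hcc : P[(fun _ => (1:ℝ))|𝓖] = fun _ => (1:ℝ) := condExp_const h𝓖 1
      simp [hcc]
    have h3 := hmom 2 le_rfl
    filter_upwards [h1, h2, h3] with ω hω1 hω2 hω3
    have : (2:ℕ).factorial = 2 := rfl
    rw [this] at hω3
    simp only [Nat.cast_ofNat] at hω3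
    have hω3' : (P[fun ω' => |X ω'| ^ 2|𝓖]) ω ≤ Q := by
      calc (P[fun ω' => |X ω'| ^ 2|𝓖]) ω ≤ (2:ℝ)/2 * b ^ (2 - 2) * Q := hω3
        _ = Q := by norm_num
    calc (P[(fun ω' => |X ω'|)|𝓖]) ω ≤ (P[fun ω => (1/2 : ℝ) * (1 + |X ω| ^ 2)|𝓖]) ω := hω1
      _ = (1/2 : ℝ) * (1 + (P[fun ω' => |X ω'| ^ 2|𝓖]) ω) := hω2
      _ ≤ (1 + Q)/2 := by linarith
  -- the master lintegral bound
  have habs : ∀ m : ℕ, ∫⁻ ω, ENNReal.ofReal (f ω * |X ω| ^ m) ∂P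
      ≤ ENNReal.ofReal (c m * ∫ ω, f ω ∂P) := by
    intro m
    match m with
    | 0 =>
      simp only [pow_zero, mul_one, hc, if_pos rfl]
      rw [one_mul, ← ofReal_integral_eq_lintegral_ofReal hfi
        (Filter.Eventually.of_forall hf0)]
    | 1 =>
      have : c 1 = (1 + Q)/2 := by simp [hc]
      rw [this]
      simp only [pow_one]
      exact aux_mul_bound P h𝓖 (by positivity) hf hf0 hfi (fun ω => abs_nonneg _)
        hXi.abs habs1
    | (m + 2) =>
      have hcm : c (m + 2) = ((m+2).factorial : ℝ)/2 * b ^ m * Q := by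
        rw [hc]; simp
      rw [hcm]
      have := aux_mul_bound P h𝓖 (c := ((m+2).factorial : ℝ)/2 * b ^ (m + 2 - 2) * Q)
        (by positivity) hf hf0 hfi (fun ω => pow_nonneg (abs_nonneg _) _)
        (hXm (m+2) (by omega)) (hmom (m+2) (by omega))
      simpa using this

  -- series u
  set u : ℕ → ℝ := fun m => t ^ m / m.factorial * c m with hu
  have hunn : ∀ m, 0 ≤ u m := fun m => mul_nonneg (by positivity) (hcnn m)
  have hu2 : ∀ i : ℕ, u (i + 2) = t ^ 2 * Q / 2 * (t * b) ^ i := by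
    intro i
    have hcme : c (i + 2) = ((i + 2).factorial : ℝ) / 2 * b ^ i * Q := by simp [hc]
    rw [hu]; dsimp only; rw [hcme]
    have hfne : ((i + 2).factorial : ℝ) ≠ 0 := by positivity
    field_simp
    ring
  have htb0 : 0 ≤ t * b := le_of_lt (mul_pos ht hb)
  have htb1 : t * b < 1 := lt_of_le_of_lt htb (by norm_num)
  have hgeo : Summable (fun i : ℕ => t ^ 2 * Q / 2 * (t * b) ^ i) :=
    (summable_geometric_of_lt_one htb0 htb1).mul_left _
  have hsum_tail_s : Summable (fun i : ℕ => u (i + 2)) := by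
    simpa only [hu2] using hgeo
  have hsum_u : Summable u := (summable_nat_add_iff 2).mp hsum_tail_s
  have hsum_tail : ∑' i : ℕ, u (i + 2) ≤ t ^ 2 * Q := by
    have he : ∑' i : ℕ, u (i + 2) = t ^ 2 * Q / 2 * (1 - t * b)⁻¹ := by
      simp_rw [hu2]; rw [tsum_mul_left, tsum_geometric_of_lt_one htb0 htb1]
    rw [he]
    have h1 : (1 - t * b)⁻¹ ≤ 2 := by
      have h2 : (1/2 : ℝ) ≤ 1 - t * b := by linarith
      calc (1 - t * b)⁻¹ ≤ ((1:ℝ)/2)⁻¹ := by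
            exact inv_anti₀ (by norm_num) h2
        _ = 2 := by norm_num
    calc t ^ 2 * Q / 2 * (1 - t * b)⁻¹ ≤ t ^ 2 * Q / 2 * 2 :=
        mul_le_mul_of_nonneg_left h1 (by positivity)
      _ = t ^ 2 * Q := by ring
  -- per-m lintegral bound
  have hterm : ∀ m : ℕ, ∫⁻ ω, ENNReal.ofReal (f ω * (t ^ m / m.factorial * |X ω| ^ m)) ∂P
      ≤ ENNReal.ofReal (u m * ∫ ω, f ω ∂P) := by
    intro m
    have e : ∀ ω, f ω * (t ^ m / m.factorial * |X ω| ^ m)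
        = (t ^ m / m.factorial) * (f ω * |X ω| ^ m) := fun ω => by ring
    simp_rw [e, ENNReal.ofReal_mul (show (0:ℝ) ≤ t ^ m / m.factorial by positivity)]
    rw [lintegral_const_mul' _ _ ENNReal.ofReal_ne_top]
    calc ENNReal.ofReal (t ^ m / m.factorial) * ∫⁻ ω, ENNReal.ofReal (f ω * |X ω| ^ m) ∂P
        ≤ ENNReal.ofReal (t ^ m / m.factorial) * ENNReal.ofReal (c m * ∫ ω, f ω ∂P) :=
          mul_le_mul_right (habs m) _
      _ = ENNReal.ofReal (u m * ∫ ω, f ω ∂P) := by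
          rw [← ENNReal.ofReal_mul (show (0:ℝ) ≤ t ^ m / m.factorial by positivity), hu]
          ring_nf
  have hXaesm : AEStronglyMeasurable[m0] X P := hXi.1
  -- pointwise series
  have hpt_sum : ∀ ω, Summable (fun m : ℕ => f ω * (t ^ m / m.factorial * |X ω| ^ m)) := by
    intro ω
    have h := (Real.summable_pow_div_factorial (t * |X ω|)).mul_left (f ω)
    refine h.congr fun m => ?_
    rw [mul_pow]; ring
  have hpt_exp : ∀ ω, f ω * Real.exp (t * |X ω|)
      = ∑' m : ℕ, f ω * (t ^ m / m.factorial * |X ω| ^ m) := by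
    intro ω
    rw [aux_exp_series (t * |X ω|) (by positivity), ← tsum_mul_left]
    congr 1; funext m; rw [mul_pow]; ring
  have hterm_meas : ∀ m : ℕ, AEMeasurable
      (fun ω => ENNReal.ofReal (f ω * (t ^ m / m.factorial * |X ω| ^ m))) P := by
    intro m
    exact (hfm0.aemeasurable.mul
      (((continuous_abs.comp_aestronglyMeasurable hXaesm).aemeasurable.pow_const m).const_mul
        _)).ennreal_ofReal
  have hdom : ∫⁻ ω, ENNReal.ofReal (f ω * Real.exp (t * |X ω|)) ∂P
      ≤ ENNReal.ofReal ((∑' m : ℕ, u m) * ∫ ω, f ω ∂P) := by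
    have heq : ∀ ω, ENNReal.ofReal (f ω * Real.exp (t * |X ω|))
        = ∑' m : ℕ, ENNReal.ofReal (f ω * (t ^ m / m.factorial * |X ω| ^ m)) := by
      intro ω
      rw [hpt_exp ω, ENNReal.ofReal_tsum_of_nonneg
        (fun m => mul_nonneg (hf0 ω) (by positivity)) (hpt_sum ω)]
    simp_rw [heq]
    rw [lintegral_tsum hterm_meas]
    calc ∑' m : ℕ, ∫⁻ ω, ENNReal.ofReal (f ω * (t ^ m / m.factorial * |X ω| ^ m)) ∂P
        ≤ ∑' m : ℕ, ENNReal.ofReal (u m * ∫ ω, f ω ∂P) := ENNReal.tsum_le_tsum hterm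
      _ = ENNReal.ofReal (∑' m : ℕ, u m * ∫ ω, f ω ∂P) :=
          (ENNReal.ofReal_tsum_of_nonneg
            (fun m => mul_nonneg (hunn m) hfint_nonneg) (hsum_u.mul_right _)).symm
      _ = ENNReal.ofReal ((∑' m : ℕ, u m) * ∫ ω, f ω ∂P) := by rw [tsum_mul_right]
  -- integrability of E
  have hE_meas : AEStronglyMeasurable[m0] (fun ω => f ω * Real.exp (t * X ω)) P :=
    hfm0.mul (Real.continuous_exp.comp_aestronglyMeasurable (hXaesm.const_mul t))
  have hE_nonneg : ∀ ω, 0 ≤ f ω * Real.exp (t * X ω) :=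
    fun ω => mul_nonneg (hf0 ω) (Real.exp_nonneg _)
  have hE_le : ∀ ω, f ω * Real.exp (t * X ω) ≤ f ω * Real.exp (t * |X ω|) := fun ω =>
    mul_le_mul_of_nonneg_left
      (Real.exp_le_exp.mpr (mul_le_mul_of_nonneg_left (le_abs_self _) ht.le)) (hf0 ω)
  have hE_lint : ∫⁻ ω, ENNReal.ofReal (f ω * Real.exp (t * X ω)) ∂P
      ≤ ENNReal.ofReal ((∑' m : ℕ, u m) * ∫ ω, f ω ∂P) :=
    (lintegral_mono fun ω => ENNReal.ofReal_le_ofReal (hE_le ω)).trans hdom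
  have hEi : Integrable (fun ω => f ω * Real.exp (t * X ω)) P := by
    refine ⟨hE_meas, ?_⟩
    rw [hasFiniteIntegral_iff_ofReal (Filter.Eventually.of_forall hE_nonneg)]
    exact lt_of_le_of_lt hE_lint ENNReal.ofReal_lt_top
  -- remainder R
  set R : Ω → ℝ := fun ω => Real.exp (t * |X ω|) - 1 - t * |X ω| with hRdef
  have hR0 : ∀ ω, 0 ≤ R ω := by
    intro ω
    have h := Real.add_one_le_exp (t * |X ω|)
    rw [hRdef]; dsimp only; linarith
  have habsmul : ∀ ω, |t * X ω| = t * |X ω| := fun ω => by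
    rw [abs_mul, abs_of_pos ht]
  have hfR_pt : ∀ ω, f ω * R ω
      = ∑' i : ℕ, f ω * (t ^ (i + 2) / (i + 2).factorial * |X ω| ^ (i + 2)) := by
    intro ω
    rw [hRdef]; dsimp only
    rw [aux_exp_tail (t * |X ω|) (by positivity), ← tsum_mul_left]
    congr 1; funext i; rw [mul_pow]; ring
  have hfR_sum : ∀ ω, Summable
      (fun i : ℕ => f ω * (t ^ (i + 2) / (i + 2).factorial * |X ω| ^ (i + 2))) := by
    intro ω
    exact (summable_nat_add_iff 2).2 (hpt_sum ω)
  have hfR_lint : ∫⁻ ω, ENNReal.ofReal (f ω * R ω) ∂P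
      ≤ ENNReal.ofReal (t ^ 2 * Q * ∫ ω, f ω ∂P) := by
    have heq : ∀ ω, ENNReal.ofReal (f ω * R ω) = ∑' i : ℕ,
        ENNReal.ofReal (f ω * (t ^ (i + 2) / (i + 2).factorial * |X ω| ^ (i + 2))) := by
      intro ω
      rw [hfR_pt ω, ENNReal.ofReal_tsum_of_nonneg
        (fun i => mul_nonneg (hf0 ω) (by positivity)) (hfR_sum ω)]
    simp_rw [heq]
    rw [lintegral_tsum (fun i => hterm_meas (i + 2))]
    calc ∑' i : ℕ, ∫⁻ ω, ENNReal.ofReal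
          (f ω * (t ^ (i + 2) / (i + 2).factorial * |X ω| ^ (i + 2))) ∂P
        ≤ ∑' i : ℕ, ENNReal.ofReal (u (i + 2) * ∫ ω, f ω ∂P) :=
          ENNReal.tsum_le_tsum (fun i => hterm (i + 2))
      _ = ENNReal.ofReal (∑' i : ℕ, u (i + 2) * ∫ ω, f ω ∂P) :=
          (ENNReal.ofReal_tsum_of_nonneg
            (fun i => mul_nonneg (hunn _) hfint_nonneg) (hsum_tail_s.mul_right _)).symm
      _ = ENNReal.ofReal ((∑' i : ℕ, u (i + 2)) * ∫ ω, f ω ∂P) := by rw [tsum_mul_right]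
      _ ≤ ENNReal.ofReal (t ^ 2 * Q * ∫ ω, f ω ∂P) :=
          ENNReal.ofReal_le_ofReal (mul_le_mul_of_nonneg_right hsum_tail hfint_nonneg)
  have hR_meas : AEStronglyMeasurable[m0] R P := by
    have h1 : AEStronglyMeasurable[m0] (fun ω => t * |X ω|) P := by
      have := hXaesm.norm.const_mul t
      simpa [Real.norm_eq_abs] using this
    exact ((Real.continuous_exp.comp_aestronglyMeasurable h1).sub
      aestronglyMeasurable_const).sub h1
  have hfR_meas : AEStronglyMeasurable[m0] (fun ω => f ω * R ω) P := hfm0.mul hR_meas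
  have hfRi : Integrable (fun ω => f ω * R ω) P := by
    refine ⟨hfR_meas, ?_⟩
    rw [hasFiniteIntegral_iff_ofReal
      (Filter.Eventually.of_forall fun ω => mul_nonneg (hf0 ω) (hR0 ω))]
    exact lt_of_le_of_lt hfR_lint ENNReal.ofReal_lt_top
  have hfR_int_le : ∫ ω, f ω * R ω ∂P ≤ t ^ 2 * Q * ∫ ω, f ω ∂P := by
    rw [integral_eq_lintegral_of_nonneg_ae
      (Filter.Eventually.of_forall fun ω => mul_nonneg (hf0 ω) (hR0 ω)) hfR_meas]
    exact ENNReal.toReal_le_of_le_ofReal (by positivity) hfR_lint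
  -- f * X
  have hfX_meas : AEStronglyMeasurable[m0] (fun ω => f ω * X ω) P := hfm0.mul hXaesm
  have hfXi : Integrable (fun ω => f ω * X ω) P := by
    refine ⟨hfX_meas, ?_⟩
    rw [hasFiniteIntegral_iff_norm]
    have he : ∀ ω, ENNReal.ofReal ‖f ω * X ω‖ = ENNReal.ofReal (f ω * |X ω| ^ 1) := by
      intro ω
      rw [Real.norm_eq_abs, abs_mul, abs_of_nonneg (hf0 ω), pow_one]
    simp_rw [he]
    exact lt_of_le_of_lt (habs 1) ENNReal.ofReal_lt_top
  have hfX0 : ∫ ω, f ω * X ω ∂P = 0 := by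
    have h2 : P[f * X|𝓖] =ᵐ[P] f * P[X|𝓖] :=
      condExp_mul_of_stronglyMeasurable_left hf hfXi hXi
    have h3 : (f * P[X|𝓖]) =ᵐ[P] 0 := by
      filter_upwards [hmean] with ω hω
      simp only [Pi.mul_apply, Pi.zero_apply] at hω ⊢
      rw [hω, mul_zero]
    calc ∫ ω, f ω * X ω ∂P = ∫ ω, (P[f * X|𝓖]) ω ∂P := (integral_condExp h𝓖).symm
      _ = ∫ ω, (0 : Ω → ℝ) ω ∂P := integral_congr_ae (h2.trans h3)
      _ = 0 := by simp
  refine ⟨hEi, ?_⟩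
  have hpt : ∀ ω, f ω * Real.exp (t * X ω) ≤ f ω + (t * (f ω * X ω) + f ω * R ω) := by
    intro ω
    have h := aux_exp_pt (t * X ω)
    rw [habsmul ω] at h
    have h' : Real.exp (t * X ω) ≤ 1 + t * X ω + R ω := by
      rw [hRdef]; dsimp only; linarith
    calc f ω * Real.exp (t * X ω) ≤ f ω * (1 + t * X ω + R ω) :=
          mul_le_mul_of_nonneg_left h' (hf0 ω)
      _ = f ω + (t * (f ω * X ω) + f ω * R ω) := by ring
  have hInt1 : Integrable (fun ω => t * (f ω * X ω) + f ω * R ω) P :=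
    (hfXi.const_mul t).add hfRi
  have hmain := integral_mono hEi (hfi.add hInt1) hpt
  simp only [Pi.add_apply, integral_add hfi hInt1, integral_add (hfXi.const_mul t) hfRi,
    integral_const_mul, hfX0, mul_zero, zero_add] at hmain
  calc ∫ ω, f ω * Real.exp (t * X ω) ∂P
      ≤ ∫ ω, f ω ∂P + ∫ ω, f ω * R ω ∂P := hmain
    _ ≤ ∫ ω, f ω ∂P + t ^ 2 * Q * ∫ ω, f ω ∂P := by linarith
    _ = (1 + t ^ 2 * Q) * ∫ ω, f ω ∂P := by ring

lemma aux_mgf {Ω : Type*} {m0 : MeasurableSpace Ω} (P : Measure Ω) [IsProbabilityMeasure P]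
    (𝓖 : ℕ → MeasurableSpace Ω) (hle : ∀ j, 𝓖 j ≤ m0) (hmono : Monotone 𝓖)
    (X : ℕ → Ω → ℝ) {b Q t : ℝ}
    (hb : 0 < b) (hQ : 0 < Q) (ht : 0 < t) (htb : t * b ≤ 1/2)
    (hmeas : ∀ j, 1 ≤ j → StronglyMeasurable[𝓖 j] (X j))
    (hXi : ∀ j, 1 ≤ j → Integrable (X j) P)
    (hXm : ∀ j, 1 ≤ j → ∀ m, 2 ≤ m → Integrable (fun ω => |X j ω| ^ m) P)
    (hmean : ∀ j, 1 ≤ j → P[X j|𝓖 (j - 1)] =ᵐ[P] 0)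
    (hmom : ∀ j, 1 ≤ j → ∀ m, 2 ≤ m → ∀ᵐ ω ∂P,
      (P[fun ω' => |X j ω'| ^ m|𝓖 (j - 1)]) ω ≤ (m.factorial : ℝ) / 2 * b ^ (m - 2) * Q) :
    ∀ n : ℕ, Integrable (fun ω => Real.exp (t * ∑ j ∈ Finset.Icc 1 n, X j ω)) P ∧
      ∫ ω, Real.exp (t * ∑ j ∈ Finset.Icc 1 n, X j ω) ∂P ≤ (1 + t ^ 2 * Q) ^ n := by
  intro n
  induction n with
  | zero =>
    simp only [Finset.Icc_eq_empty_of_lt (by norm_num : (0:ℕ) < 1), Finset.sum_empty,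
      mul_zero, Real.exp_zero, pow_zero]
    exact ⟨integrable_const 1, by simp⟩
  | succ n ih =>
    have hsum_meas : StronglyMeasurable[𝓖 n] (fun ω => ∑ j ∈ Finset.Icc 1 n, X j ω) := by
      refine Finset.stronglyMeasurable_fun_sum _ (fun j hj => ?_)
      rw [Finset.mem_Icc] at hj
      exact (hmeas j hj.1).mono (hmono hj.2)
    have hf_meas : StronglyMeasurable[𝓖 n] (fun ω => Real.exp (t * ∑ j ∈ Finset.Icc 1 n, X j ω)) :=
      Real.continuous_exp.comp_stronglyMeasurable (hsum_meas.const_mul t)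
    have hmean' : P[X (n + 1)|𝓖 n] =ᵐ[P] 0 := by
      have := hmean (n + 1) (by omega)
      simpa using this
    have hmom' : ∀ m, 2 ≤ m → ∀ᵐ ω ∂P,
        (P[fun ω' => |X (n + 1) ω'| ^ m|𝓖 n]) ω ≤ (m.factorial : ℝ) / 2 * b ^ (m - 2) * Q := by
      intro m hm
      have := hmom (n + 1) (by omega) m hm
      simpa using this
    have hstep := aux_step P (hle n) hb hQ ht htb hf_meas
      (fun ω => Real.exp_nonneg _) ih.1 (hXi (n + 1) (by omega))
      (fun m hm => hXm (n + 1) (by omega) m hm) hmean' hmom'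
    have hrw : (fun ω => Real.exp (t * ∑ j ∈ Finset.Icc 1 (n + 1), X j ω))
        = fun ω => Real.exp (t * ∑ j ∈ Finset.Icc 1 n, X j ω) * Real.exp (t * X (n + 1) ω) := by
      funext ω
      rw [Finset.sum_Icc_succ_top (by omega : 1 ≤ n + 1), mul_add, Real.exp_add]
    rw [hrw]
    refine ⟨hstep.1, ?_⟩
    calc ∫ ω, Real.exp (t * ∑ j ∈ Finset.Icc 1 n, X j ω) * Real.exp (t * X (n + 1) ω) ∂P
        ≤ (1 + t ^ 2 * Q) * ∫ ω, Real.exp (t * ∑ j ∈ Finset.Icc 1 n, X j ω) ∂P := hstep.2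
      _ ≤ (1 + t ^ 2 * Q) * (1 + t ^ 2 * Q) ^ n := by
          refine mul_le_mul_of_nonneg_left ih.2 (by positivity)
      _ = (1 + t ^ 2 * Q) ^ (n + 1) := by ring

lemma aux_chernoff {Ω : Type*} {m0 : MeasurableSpace Ω} (P : Measure Ω) [IsProbabilityMeasure P]
    (𝓖 : ℕ → MeasurableSpace Ω) (hle : ∀ j, 𝓖 j ≤ m0) (hmono : Monotone 𝓖)
    (X : ℕ → Ω → ℝ) {b Q t : ℝ}
    (hb : 0 < b) (hQ : 0 < Q) (ht : 0 < t) (htb : t * b ≤ 1/2)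
    (hmeas : ∀ j, 1 ≤ j → StronglyMeasurable[𝓖 j] (X j))
    (hXi : ∀ j, 1 ≤ j → Integrable (X j) P)
    (hXm : ∀ j, 1 ≤ j → ∀ m, 2 ≤ m → Integrable (fun ω => |X j ω| ^ m) P)
    (hmean : ∀ j, 1 ≤ j → P[X j|𝓖 (j - 1)] =ᵐ[P] 0)
    (hmom : ∀ j, 1 ≤ j → ∀ m, 2 ≤ m → ∀ᵐ ω ∂P,
      (P[fun ω' => |X j ω'| ^ m|𝓖 (j - 1)]) ω ≤ (m.factorial : ℝ) / 2 * b ^ (m - 2) * Q)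
    (a : ℝ) (n : ℕ) :
    P {ω | a ≤ ∑ j ∈ Finset.Icc 1 n, X j ω}
      ≤ ENNReal.ofReal (Real.exp (-t * a + n * (t ^ 2 * Q))) := by
  have h := aux_mgf P 𝓖 hle hmono X hb hQ ht htb hmeas hXi hXm hmean hmom n
  have hmark := ProbabilityTheory.measure_ge_le_exp_mul_mgf
    (X := fun ω => ∑ j ∈ Finset.Icc 1 n, X j ω) (μ := P) a ht.le h.1
  have hmgf : mgf (fun ω => ∑ j ∈ Finset.Icc 1 n, X j ω) P t ≤ (1 + t ^ 2 * Q) ^ n := h.2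
  have hb1 : ((1:ℝ) + t ^ 2 * Q) ^ n ≤ Real.exp (n * (t ^ 2 * Q)) := by
    calc ((1:ℝ) + t ^ 2 * Q) ^ n ≤ (Real.exp (t ^ 2 * Q)) ^ n := by
          refine pow_le_pow_left₀ (by positivity) ?_ n
          linarith [Real.add_one_le_exp (t ^ 2 * Q)]
      _ = Real.exp (n * (t ^ 2 * Q)) := by rw [← Real.exp_nat_mul]
    -- pow_le_pow_left : 0 ≤ a → a ≤ b → a^n ≤ b^n
  have htotal : (P {ω | a ≤ ∑ j ∈ Finset.Icc 1 n, X j ω}).toReal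
      ≤ Real.exp (-t * a + n * (t ^ 2 * Q)) := by
    calc (P {ω | a ≤ ∑ j ∈ Finset.Icc 1 n, X j ω}).toReal
        ≤ Real.exp (-t * a) * mgf (fun ω => ∑ j ∈ Finset.Icc 1 n, X j ω) P t := hmark
      _ ≤ Real.exp (-t * a) * Real.exp (n * (t ^ 2 * Q)) := by
          refine mul_le_mul_of_nonneg_left (hmgf.trans hb1) (Real.exp_nonneg _)
      _ = Real.exp (-t * a + n * (t ^ 2 * Q)) := (Real.exp_add _ _).symm
  calc P {ω | a ≤ ∑ j ∈ Finset.Icc 1 n, X j ω}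
      = ENNReal.ofReal ((P {ω | a ≤ ∑ j ∈ Finset.Icc 1 n, X j ω}).toReal) :=
        (ENNReal.ofReal_toReal (measure_ne_top _ _)).symm
    _ ≤ ENNReal.ofReal (Real.exp (-t * a + n * (t ^ 2 * Q))) :=
        ENNReal.ofReal_le_ofReal htotal

lemma aux_twoside {Ω : Type*} {m0 : MeasurableSpace Ω} (P : Measure Ω) [IsProbabilityMeasure P]
    (𝓖 : ℕ → MeasurableSpace Ω) (hle : ∀ j, 𝓖 j ≤ m0) (hmono : Monotone 𝓖)
    (X : ℕ → Ω → ℝ) {b Q : ℝ} (hb : 0 < b) (hQ : 0 < Q)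
    (hmeas : ∀ j, 1 ≤ j → StronglyMeasurable[𝓖 j] (X j))
    (hXi : ∀ j, 1 ≤ j → Integrable (X j) P)
    (hXm : ∀ j, 1 ≤ j → ∀ m, 2 ≤ m → Integrable (fun ω => |X j ω| ^ m) P)
    (hmean : ∀ j, 1 ≤ j → P[X j|𝓖 (j - 1)] =ᵐ[P] 0)
    (hmom : ∀ j, 1 ≤ j → ∀ m, 2 ≤ m → ∀ᵐ ω ∂P,
      (P[fun ω' => |X j ω'| ^ m|𝓖 (j - 1)]) ω ≤ (m.factorial : ℝ) / 2 * b ^ (m - 2) * Q)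
    (κ' : ℝ) (hκ' : 0 < κ') :
    ∀ n : ℕ, P {ω | (n : ℝ) * κ' ≤ |∑ j ∈ Finset.Icc 1 n, X j ω|}
      ≤ ENNReal.ofReal (2 * Real.exp (-(min (1/(2*b)) (κ'/(2*Q)) * κ' / 2 * n))) := by
  set t : ℝ := min (1/(2*b)) (κ'/(2*Q)) with htdef
  have ht : 0 < t := lt_min (by positivity) (by positivity)
  have htb : t * b ≤ 1/2 := by
    have h1 : t ≤ 1/(2*b) := min_le_left _ _
    calc t * b ≤ 1/(2*b) * b := mul_le_mul_of_nonneg_right h1 hb.le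
      _ = 1/2 := by
          field_simp
  have htQ : t ^ 2 * Q ≤ t * κ' / 2 := by
    have h2 : t ≤ κ'/(2*Q) := min_le_right _ _
    have h3 := mul_le_mul_of_nonneg_left h2 ht.le
    have h5 := mul_le_mul_of_nonneg_right h3 hQ.le
    have h4 : t * (κ'/(2*Q)) * Q = t * κ' / 2 := by field_simp
    have h6 : t ^ 2 * Q = t * t * Q := by ring
    linarith
  set δ : ℝ := t * κ' / 2 with hδdef
  intro n
  have hδn : -t * ((n : ℝ) * κ') + (n : ℝ) * (t ^ 2 * Q) ≤ -(δ * n) := by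
    have h3 : (n : ℝ) * (t ^ 2 * Q) ≤ (n : ℝ) * (t * κ' / 2) :=
      mul_le_mul_of_nonneg_left htQ (Nat.cast_nonneg n)
    rw [hδdef]
    nlinarith [Nat.cast_nonneg (α := ℝ) n]
  -- upper tail
  have hup := aux_chernoff P 𝓖 hle hmono X hb hQ ht htb hmeas hXi hXm hmean hmom
    ((n : ℝ) * κ') n
  -- lower tail
  have hdn := aux_chernoff P 𝓖 hle hmono (fun j ω => -(X j ω)) hb hQ ht htb
    (fun j hj => (hmeas j hj).neg)
    (fun j hj => (hXi j hj).neg)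
    (fun j hj m hm => by simpa [abs_neg] using hXm j hj m hm)
    (fun j hj => by
      refine (condExp_neg (X j) _).trans ?_
      filter_upwards [hmean j hj] with ω hω
      simp only [Pi.neg_apply, Pi.zero_apply] at hω ⊢
      rw [hω, neg_zero])
    (fun j hj m hm => by simpa [abs_neg] using hmom j hj m hm)
    ((n : ℝ) * κ') n
  have hsub : {ω | (n : ℝ) * κ' ≤ |∑ j ∈ Finset.Icc 1 n, X j ω|}
      ⊆ {ω | (n : ℝ) * κ' ≤ ∑ j ∈ Finset.Icc 1 n, X j ω}
        ∪ {ω | (n : ℝ) * κ' ≤ ∑ j ∈ Finset.Icc 1 n, (fun j ω => -(X j ω)) j ω} := by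
    intro ω hω
    simp only [Set.mem_setOf_eq] at hω
    rcases le_abs.mp hω with h | h
    · exact Or.inl h
    · refine Or.inr ?_
      simp only [Set.mem_setOf_eq, Finset.sum_neg_distrib]
      exact h
  calc P {ω | (n : ℝ) * κ' ≤ |∑ j ∈ Finset.Icc 1 n, X j ω|}
      ≤ P ({ω | (n : ℝ) * κ' ≤ ∑ j ∈ Finset.Icc 1 n, X j ω}
        ∪ {ω | (n : ℝ) * κ' ≤ ∑ j ∈ Finset.Icc 1 n, (fun j ω => -(X j ω)) j ω}) :=
        measure_mono hsub
    _ ≤ P {ω | (n : ℝ) * κ' ≤ ∑ j ∈ Finset.Icc 1 n, X j ω}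
        + P {ω | (n : ℝ) * κ' ≤ ∑ j ∈ Finset.Icc 1 n, (fun j ω => -(X j ω)) j ω} :=
        measure_union_le _ _
    _ ≤ ENNReal.ofReal (Real.exp (-t * ((n : ℝ) * κ') + n * (t ^ 2 * Q)))
        + ENNReal.ofReal (Real.exp (-t * ((n : ℝ) * κ') + n * (t ^ 2 * Q))) :=
        add_le_add hup hdn
    _ ≤ ENNReal.ofReal (Real.exp (-(δ * n))) + ENNReal.ofReal (Real.exp (-(δ * n))) := by
        refine add_le_add ?_ ?_ <;>
          exact ENNReal.ofReal_le_ofReal (Real.exp_le_exp.mpr hδn)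
    _ = ENNReal.ofReal (2 * Real.exp (-(δ * n))) := by
        rw [← ENNReal.ofReal_add (Real.exp_nonneg _) (Real.exp_nonneg _)]
        ring_nf

lemma aux_log_nat_nonneg (k : ℕ) : 0 ≤ Real.log k := by
  rcases Nat.eq_zero_or_pos k with h | h
  · simp [h]
  · exact Real.log_natCast_nonneg k

/-- **Almost-sure control of adaptively sampled gradient estimation errors.**
If within each iteration `k ≥ 2` the `ℝ^d`-valued gradient observation errors
`(V k j)_j` form a martingale difference array whose coordinates satisfy the
conditional Bernstein moment condition with uniform parameters `(b, σ²)`, and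
the adaptive sample size `N k` satisfies `N k ≥ λ_k ν` with
`λ_k = λ₀ (log k)^{1+ε_λ}`, then for every `κ > 0`, almost surely the norm of
the sample-mean error exceeds `κ` only finitely often. -/
theorem stmt_16
    {Ω : Type*} {m0 : MeasurableSpace Ω} (P : Measure Ω) [IsProbabilityMeasure P]
    (d : ℕ) (hd : 1 ≤ d)
    (V : ℕ → ℕ → Ω → EuclideanSpace ℝ (Fin d))
    (𝓕 : ℕ → ℕ → MeasurableSpace Ω)
    (hFle : ∀ k j, 𝓕 k j ≤ m0) (hFmono : ∀ k, Monotone (𝓕 k))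
    (b σ : ℝ) (hb : 0 < b) (hσ : 0 < σ ^ 2)
    (hadapted : ∀ k, 2 ≤ k → ∀ j, 1 ≤ j → StronglyMeasurable[𝓕 k j] (V k j))
    (hint : ∀ k, 2 ≤ k → ∀ j, 1 ≤ j → ∀ r : Fin d,
      Integrable (fun ω => V k j ω r) P)
    (hmean : ∀ k, 2 ≤ k → ∀ j, 1 ≤ j → ∀ r : Fin d,
      P[fun ω => V k j ω r | 𝓕 k (j - 1)] =ᵐ[P] 0)
    (hintm : ∀ k, 2 ≤ k → ∀ j, 1 ≤ j → ∀ r : Fin d, ∀ m : ℕ, 2 ≤ m →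
      Integrable (fun ω => |V k j ω r| ^ m) P)
    (hmom : ∀ k, 2 ≤ k → ∀ j, 1 ≤ j → ∀ r : Fin d, ∀ m : ℕ, 2 ≤ m →
      ∀ᵐ ω ∂P, (P[fun ω' => |V k j ω' r| ^ m | 𝓕 k (j - 1)]) ω
        ≤ (m.factorial : ℝ) / 2 * b ^ (m - 2) * σ ^ 2)
    (εlam lam0 ν : ℝ) (hεlam : εlam ∈ Set.Ioo (0 : ℝ) 1) (hlam0 : 2 ≤ lam0)
    (hν : 0 < ν)
    (N : ℕ → Ω → ℕ) (hNmeas : ∀ k, Measurable (N k))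
    (hNpos : ∀ k, ∀ᵐ ω ∂P, 1 ≤ N k ω)
    (hN : ∀ k : ℕ, 2 ≤ k →
      ∀ᵐ ω ∂P, lam0 * Real.log (k : ℝ) ^ ((1 : ℝ) + εlam) * ν ≤ (N k ω : ℝ)) :
    ∀ κ : ℝ, 0 < κ →
      P {ω | ∃ᶠ k in atTop,
        κ < ‖((N k ω : ℝ))⁻¹ • ∑ j ∈ Finset.Icc 1 (N k ω), V k j ω‖} = 0 := by
  intro κ hκ
  classical
  obtain ⟨hε0, hε1⟩ := hεlam
  have hd0 : (0:ℝ) < d := by exact_mod_cast Nat.lt_of_lt_of_le Nat.zero_lt_one hd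
  set Q : ℝ := σ ^ 2 with hQdef
  have hQ : 0 < Q := hσ
  set κ' : ℝ := κ / d with hκ'def
  have hκ' : 0 < κ' := div_pos hκ hd0
  set t : ℝ := min (1/(2*b)) (κ'/(2*Q)) with htdef
  have ht : 0 < t := lt_min (by positivity) (by positivity)
  set δ : ℝ := t * κ' / 2 with hδdef
  have hδ : 0 < δ := by positivity
  set ρ : ℝ := Real.exp (-δ) with hρdef
  have hρ0 : 0 < ρ := Real.exp_pos _
  have hρ1 : ρ < 1 := by
    rw [hρdef]
    exact Real.exp_lt_one_iff.mpr (by linarith)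
  set C : ℝ := 2 * d * (1 - ρ)⁻¹ with hCdef
  have hinvρ : 1 ≤ (1 - ρ)⁻¹ := by
    have h0 : 0 < 1 - ρ := by linarith
    calc (1:ℝ) = 1⁻¹ := by norm_num
      _ ≤ (1 - ρ)⁻¹ := inv_anti₀ h0 (by linarith)
  have hC1 : 1 ≤ C := by
    rw [hCdef]
    have h1d : (1:ℝ) ≤ d := by exact_mod_cast hd
    nlinarith
  have hC0 : 0 ≤ C := le_trans zero_le_one hC1
  set lam : ℕ → ℝ := fun k => lam0 * Real.log k ^ ((1:ℝ) + εlam) * ν with hlamdef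
  set s : ℕ → Set Ω := fun k =>
    {ω | κ < ‖((N k ω : ℝ))⁻¹ • ∑ j ∈ Finset.Icc 1 (N k ω), V k j ω‖} with hsdef
  -- key bound for k ≥ 2
  have hkey : ∀ k, 2 ≤ k → P (s k) ≤ ENNReal.ofReal (C * ρ ^ (lam k)) := by
    intro k hk
    have hlogk : 0 < Real.log k := Real.log_pos (by exact_mod_cast hk)
    have hlamk : 0 < lam k := by
      rw [hlamdef]
      have := Real.rpow_pos_of_pos hlogk ((1:ℝ) + εlam)
      positivity
    set G : Set Ω := {ω | lam k ≤ (N k ω : ℝ)} with hGdef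
    have hGc : P Gᶜ = 0 := by
      have h := hN k hk
      rw [ae_iff] at h
      exact h
    set mk : ℕ := ⌈lam k⌉₊ with hmkdef
    have hmk1 : 1 ≤ mk := Nat.one_le_ceil_iff.mpr hlamk
    set T : Fin d → ℕ → Set Ω := fun r n =>
      {ω | (n:ℝ) * κ' ≤ |∑ j ∈ Finset.Icc 1 n, V k j ω r|} with hTdef
    have hTbound : ∀ (r : Fin d) (n : ℕ),
        P (T r n) ≤ ENNReal.ofReal (2 * Real.exp (-(δ * n))) := by
      intro r n
      have hcoord : ∀ j, 1 ≤ j → StronglyMeasurable[𝓕 k j] (fun ω => V k j ω r) := by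
        intro j hj
        exact (EuclideanSpace.proj (𝕜 := ℝ) r).continuous.comp_stronglyMeasurable
          (hadapted k hk j hj)
      have h := aux_twoside P (𝓕 k) (hFle k) (hFmono k) (fun j ω => V k j ω r) hb hQ
        hcoord (fun j hj => hint k hk j hj r)
        (fun j hj m hm => hintm k hk j hj r m hm)
        (fun j hj => hmean k hk j hj r)
        (fun j hj m hm => hmom k hk j hj r m hm) κ' hκ' n
      exact h
    have hsubset : s k ∩ G ⊆ ⋃ r : Fin d, ⋃ i : ℕ, T r (mk + i) := by
      rintro ω ⟨hω1, hω2⟩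
      have hn_lam : lam k ≤ (N k ω : ℝ) := hω2
      have hmk_le : mk ≤ N k ω := Nat.ceil_le.mpr hn_lam
      have hn1 : 1 ≤ N k ω := le_trans hmk1 hmk_le
      have hn0 : (0:ℝ) < (N k ω : ℝ) := by exact_mod_cast hn1
      have hω1' : κ < ‖((N k ω : ℝ))⁻¹ • ∑ j ∈ Finset.Icc 1 (N k ω), V k j ω‖ := hω1
      have hex : ∃ r : Fin d,
          ((N k ω : ℝ)) * κ' ≤ |(∑ j ∈ Finset.Icc 1 (N k ω), V k j ω) r| := by
        by_contra hcon
        push_neg at hcon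
        have hnormle : ‖∑ j ∈ Finset.Icc 1 (N k ω), V k j ω‖
            ≤ (d:ℝ) * ((N k ω : ℝ) * κ') := by
          rw [EuclideanSpace.norm_eq]
          have hsumle : (∑ r : Fin d, ‖(∑ j ∈ Finset.Icc 1 (N k ω), V k j ω) r‖ ^ 2)
              ≤ (d:ℝ) * ((N k ω : ℝ) * κ')^2 := by
            calc (∑ r : Fin d, ‖(∑ j ∈ Finset.Icc 1 (N k ω), V k j ω) r‖ ^ 2)
                ≤ ∑ _r : Fin d, ((N k ω : ℝ) * κ')^2 := by
                  refine Finset.sum_le_sum (fun r _ => ?_)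
                  rw [Real.norm_eq_abs]
                  exact pow_le_pow_left₀ (abs_nonneg _) (hcon r).le 2
              _ = (d:ℝ) * ((N k ω : ℝ) * κ')^2 := by
                  rw [Finset.sum_const, Finset.card_univ, Fintype.card_fin,
                    nsmul_eq_mul]
          calc Real.sqrt (∑ r : Fin d, ‖(∑ j ∈ Finset.Icc 1 (N k ω), V k j ω) r‖ ^ 2)
              ≤ Real.sqrt ((d:ℝ) * ((N k ω : ℝ) * κ')^2) := Real.sqrt_le_sqrt hsumle
            _ ≤ Real.sqrt (((d:ℝ) * ((N k ω : ℝ) * κ'))^2) := by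
                refine Real.sqrt_le_sqrt ?_
                have h1d : (1:ℝ) ≤ d := by exact_mod_cast hd
                nlinarith [sq_nonneg ((N k ω : ℝ) * κ'), hn0.le, hκ'.le]
            _ = (d:ℝ) * ((N k ω : ℝ) * κ') := Real.sqrt_sq (by positivity)
        have hle : ‖((N k ω : ℝ))⁻¹ • ∑ j ∈ Finset.Icc 1 (N k ω), V k j ω‖ ≤ κ := by
          rw [norm_smul, norm_inv, Real.norm_natCast]
          calc ((N k ω : ℝ))⁻¹ * ‖∑ j ∈ Finset.Icc 1 (N k ω), V k j ω‖
              ≤ ((N k ω : ℝ))⁻¹ * ((d:ℝ) * ((N k ω : ℝ) * κ')) :=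
                mul_le_mul_of_nonneg_left hnormle (by positivity)
            _ = κ := by
                rw [hκ'def]
                field_simp
        exact absurd hω1' (not_lt.mpr hle)
      obtain ⟨r, hr⟩ := hex
      refine Set.mem_iUnion.mpr ⟨r, Set.mem_iUnion.mpr ⟨N k ω - mk, ?_⟩⟩
      have hnn : mk + (N k ω - mk) = N k ω := by omega
      show ((mk + (N k ω - mk) : ℕ) : ℝ) * κ'
        ≤ |∑ j ∈ Finset.Icc 1 (mk + (N k ω - mk)), V k j ω r|
      rw [hnn]
      have happ : (∑ j ∈ Finset.Icc 1 (N k ω), V k j ω) r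
          = ∑ j ∈ Finset.Icc 1 (N k ω), V k j ω r := by
        rw [WithLp.ofLp_sum, Finset.sum_apply]
      rw [happ] at hr
      exact hr
    have h1 : P (s k) ≤ P (s k ∩ G) + P Gᶜ := by
      calc P (s k) ≤ P ((s k ∩ G) ∪ Gᶜ) := by
            refine measure_mono (fun ω hω => ?_)
            by_cases hg : ω ∈ G
            · exact Or.inl ⟨hω, hg⟩
            · exact Or.inr hg
        _ ≤ P (s k ∩ G) + P Gᶜ := measure_union_le _ _
    rw [hGc, add_zero] at h1
    have h2 : P (s k ∩ G) ≤ ∑' r : Fin d, ∑' i : ℕ, P (T r (mk + i)) :=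
      (measure_mono hsubset).trans ((measure_iUnion_le _).trans
        (ENNReal.tsum_le_tsum fun r => measure_iUnion_le _))
    have hgeosum : Summable (fun i : ℕ => 2 * ρ ^ mk * ρ ^ i) :=
      (summable_geometric_of_lt_one hρ0.le hρ1).mul_left _
    have h3 : ∀ r : Fin d, (∑' i : ℕ, P (T r (mk + i)))
        ≤ ENNReal.ofReal (2 * (1-ρ)⁻¹ * ρ ^ mk) := by
      intro r
      calc (∑' i : ℕ, P (T r (mk + i)))
          ≤ ∑' i : ℕ, ENNReal.ofReal (2 * ρ ^ mk * ρ ^ i) := by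
            refine ENNReal.tsum_le_tsum (fun i => ?_)
            refine (hTbound r (mk + i)).trans (le_of_eq ?_)
            congr 1
            rw [hρdef, mul_assoc, ← pow_add, ← Real.exp_nat_mul]
            congr 1
            push_cast
            ring
        _ = ENNReal.ofReal (∑' i : ℕ, 2 * ρ ^ mk * ρ ^ i) :=
            (ENNReal.ofReal_tsum_of_nonneg (fun i => by positivity) hgeosum).symm
        _ = ENNReal.ofReal (2 * ρ ^ mk * (1-ρ)⁻¹) := by
            rw [tsum_mul_left, tsum_geometric_of_lt_one hρ0.le hρ1]
        _ = ENNReal.ofReal (2 * (1-ρ)⁻¹ * ρ ^ mk) := by ring_nf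
    have hρmk : ρ ^ mk ≤ ρ ^ (lam k) := by
      rw [← Real.rpow_natCast ρ mk]
      exact Real.rpow_le_rpow_of_exponent_ge hρ0 hρ1.le (Nat.le_ceil _)
    have h4 : (∑' r : Fin d, ∑' i : ℕ, P (T r (mk + i)))
        ≤ ENNReal.ofReal (C * ρ ^ (lam k)) := by
      calc (∑' r : Fin d, ∑' i : ℕ, P (T r (mk + i)))
          ≤ ∑' _r : Fin d, ENNReal.ofReal (2 * (1-ρ)⁻¹ * ρ ^ mk) :=
            ENNReal.tsum_le_tsum h3
        _ = (d : ℕ) • ENNReal.ofReal (2 * (1-ρ)⁻¹ * ρ ^ mk) := by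
            rw [tsum_fintype, Finset.sum_const, Finset.card_univ, Fintype.card_fin]
        _ = ENNReal.ofReal ((d:ℝ) * (2 * (1-ρ)⁻¹ * ρ ^ mk)) := by
            rw [nsmul_eq_mul, ← ENNReal.ofReal_natCast d,
              ← ENNReal.ofReal_mul (by positivity)]
        _ ≤ ENNReal.ofReal (C * ρ ^ (lam k)) := by
            refine ENNReal.ofReal_le_ofReal ?_
            have he : (d:ℝ) * (2 * (1-ρ)⁻¹ * ρ ^ mk) = C * ρ ^ mk := by
              rw [hCdef]; ring
            rw [he]
            exact mul_le_mul_of_nonneg_left hρmk hC0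
    exact h1.trans (h2.trans h4)
  -- bound for all k
  have hall : ∀ k, P (s k) ≤ ENNReal.ofReal (C * ρ ^ (lam k)) := by
    intro k
    by_cases hk : 2 ≤ k
    · exact hkey k hk
    · have hlamk0 : lam k = 0 := by
        interval_cases k <;>
          simp [hlamdef, Real.log_one, Real.zero_rpow
            (show (1:ℝ) + εlam ≠ 0 by linarith)]
      rw [hlamk0, Real.rpow_zero, mul_one]
      calc P (s k) ≤ 1 := prob_le_one
        _ = ENNReal.ofReal 1 := by simp
        _ ≤ ENNReal.ofReal C := ENNReal.ofReal_le_ofReal hC1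
  -- summability
  have hg_nonneg : ∀ k : ℕ, 0 ≤ C * ρ ^ (lam k) :=
    fun k => mul_nonneg hC0 (Real.rpow_nonneg hρ0.le _)
  have hsum_real : Summable (fun k : ℕ => C * ρ ^ (lam k)) := by
    refine Summable.mul_left C ?_
    have hρlam : ∀ k : ℕ, ρ ^ (lam k) = Real.exp (-(δ * lam k)) := by
      intro k
      rw [Real.rpow_def_of_pos hρ0, hρdef, Real.log_exp]
      ring_nf
    have hA : 0 < δ * (lam0 * ν) := by
      have : (0:ℝ) < lam0 := by linarith
      positivity
    set A : ℝ := 2 / (δ * (lam0 * ν)) with hAdef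
    have htends : Tendsto (fun k : ℕ => Real.log k ^ (εlam : ℝ)) atTop atTop := by
      refine (tendsto_rpow_atTop hε0).comp ?_
      exact Real.tendsto_log_atTop.comp tendsto_natCast_atTop_atTop
    have hev : ∀ᶠ k : ℕ in atTop, ρ ^ (lam k) ≤ ((k:ℝ) ^ (2:ℝ))⁻¹ := by
      filter_upwards [htends.eventually_ge_atTop A, eventually_ge_atTop 2] with k hAk hk2
      have hlogk : 0 < Real.log k := Real.log_pos (by exact_mod_cast hk2)
      have hk0 : (0:ℝ) < k := by
        have : (0:ℕ) < k := by omega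
        exact_mod_cast this
      have hdlam : 2 * Real.log k ≤ δ * lam k := by
        have hsplit : Real.log k ^ ((1:ℝ) + εlam)
            = Real.log k * Real.log k ^ (εlam : ℝ) := by
          rw [Real.rpow_add hlogk, Real.rpow_one]
        have h2' : 2 ≤ δ * (lam0 * ν) * Real.log k ^ (εlam : ℝ) := by
          have := mul_le_mul_of_nonneg_left hAk hA.le
          rw [hAdef] at this
          calc (2:ℝ) = δ * (lam0 * ν) * (2 / (δ * (lam0 * ν))) := by
                field_simp
            _ ≤ δ * (lam0 * ν) * Real.log k ^ (εlam : ℝ) := this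
          
        calc 2 * Real.log k
            ≤ (δ * (lam0 * ν) * Real.log k ^ (εlam : ℝ)) * Real.log k := by
              exact mul_le_mul_of_nonneg_right h2' hlogk.le
          _ = δ * lam k := by
              rw [hlamdef]
              dsimp only
              rw [hsplit]
              ring
      rw [hρlam k]
      have hrhs : ((k:ℝ) ^ (2:ℝ))⁻¹ = Real.exp (-(2 * Real.log k)) := by
        rw [Real.rpow_def_of_pos hk0, ← Real.exp_neg]
        ring_nf
      rw [hrhs]
      exact Real.exp_le_exp.mpr (by linarith)
    have hgsum : Summable (fun k : ℕ => ((k:ℝ) ^ (2:ℝ))⁻¹) := by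
      have := Real.summable_one_div_nat_rpow.mpr (show (1:ℝ) < 2 by norm_num)
      simpa [one_div] using this
    refine summable_of_isBigO_nat hgsum ?_
    rw [Asymptotics.isBigO_iff]
    refine ⟨1, ?_⟩
    filter_upwards [hev] with k hk
    rw [one_mul, Real.norm_eq_abs, Real.norm_eq_abs,
      abs_of_nonneg (Real.rpow_nonneg hρ0.le _),
      abs_of_nonneg (by positivity : (0:ℝ) ≤ ((k:ℝ) ^ (2:ℝ))⁻¹)]
    exact hk
  have hsum : (∑' k, P (s k)) ≠ ⊤ := by
    have hle : (∑' k, P (s k)) ≤ ∑' k, ENNReal.ofReal (C * ρ ^ (lam k)) :=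
      ENNReal.tsum_le_tsum hall
    have heq : (∑' k, ENNReal.ofReal (C * ρ ^ (lam k)))
        = ENNReal.ofReal (∑' k, C * ρ ^ (lam k)) :=
      (ENNReal.ofReal_tsum_of_nonneg hg_nonneg hsum_real).symm
    rw [heq] at hle
    exact ne_top_of_le_ne_top ENNReal.ofReal_ne_top hle
  have hgoal : {ω | ∃ᶠ k in atTop,
      κ < ‖((N k ω : ℝ))⁻¹ • ∑ j ∈ Finset.Icc 1 (N k ω), V k j ω‖}
      = limsup s atTop := by
    ext ω
    rw [mem_limsup_iff_frequently_mem]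
    rfl
  rw [hgoal]
  exact measure_limsup_atTop_eq_zero hsum
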